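/- Let d ≥ 2 and, for 1 ≤ r ≤ d−1, define S_r(x) as the average over all C(d,r) size-r subsets R of {1,...,d} of max{x_j : j ∈ R}. Then there exist β₀ ∈ ℝ and β₁,...,β_{d−1} ∈ ℝ such that sup_{x ∈ [0,1]^d} |max_i x_i − β₀ − Σ_{r=1}^{d−1} β_r S_r(x)| ≤ 1/2^d. -/

import Mathlib

lemma alt_bound : ∀ (n : ℕ) (y : Fin n → ℝ), Monotone y → (∀ i, 0 ≤ y i) →
    0 ≤ (∑ k : Fin n, (-1:ℝ)^(n-1-(k:ℕ)) * y k) ∧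
    ∀ b : ℝ, 0 ≤ b → (∀ i, y i ≤ b) → (∑ k : Fin n, (-1:ℝ)^(n-1-(k:ℕ)) * y k) ≤ b := by
  intro n
  induction n with
  | zero => intro y _ _; simp
  | succ n ih =>
    intro y hmono hpos
    have key : (∑ k : Fin (n+1), (-1:ℝ)^(n+1-1-(k:ℕ)) * y k)
        = y (Fin.last n) - ∑ k : Fin n, (-1:ℝ)^(n-1-(k:ℕ)) * (y ∘ Fin.castSucc) k := by
      rw [Fin.sum_univ_castSucc]
      simp only [Fin.val_last, Fin.coe_castSucc, Function.comp_apply]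
      have h1 : ∀ k : Fin n, (n+1-1-(k:ℕ)) = (n-1-(k:ℕ)) + 1 := by
        intro k; have := k.isLt; omega
      rw [Finset.sum_congr rfl (fun k _ => by rw [h1 k])]
      simp [pow_succ]
      ring
    obtain ⟨ih1, ih2⟩ := ih (y ∘ Fin.castSucc) (hmono.comp (by exact fun a b h => Fin.castSucc_le_castSucc_iff.mpr h)) (fun i => hpos _)
    have hA : (∑ k : Fin n, (-1:ℝ)^(n-1-(k:ℕ)) * (y ∘ Fin.castSucc) k) ≤ y (Fin.last n) :=
      ih2 _ (hpos _) (fun i => hmono (Fin.le_last _))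
    constructor
    · rw [key]; linarith
    · intro b hb hyb
      rw [key]
      have := hyb (Fin.last n)
      linarith


lemma binom_sum (d k : ℕ) (hk : k < d) :
    ∑ r ∈ Finset.Icc 1 d, (-1/2:ℝ)^(d-r) * (k.choose (r-1)) = (-1/2)^(d-1) * (-1)^k := by
  have hicc : Finset.Icc 1 d = Finset.Ico 1 (d+1) := by rw [Finset.Ico_add_one_right_eq_Icc]
  rw [hicc, Finset.sum_Ico_eq_sum_range]
  have h0 : d + 1 - 1 = d := by omega
  rw [h0]
  have step : ∀ s ∈ Finset.range d, (-1/2:ℝ)^(d-(1+s)) * (k.choose ((1+s)-1))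
      = (-1/2)^(d-1) * ((-2)^s * (k.choose s)) := by
    intro s hs
    rw [Finset.mem_range] at hs
    have h1 : (1+s)-1 = s := by omega
    have h2 : d - 1 = (d - (1+s)) + s := by omega
    rw [h1, h2, pow_add]
    have h3 : ((-1/2:ℝ))^s * (-2)^s = 1 := by
      rw [← mul_pow]; norm_num
    rw [mul_assoc, show ((-1/2:ℝ)^s * ((-2)^s * (k.choose s))) = ((-1/2)^s * (-2)^s) * k.choose s by ring, h3, one_mul]
  rw [Finset.sum_congr rfl step, ← Finset.mul_sum]
  congr 1
  have hsub : ∑ s ∈ Finset.range d, ((-2:ℝ))^s * (k.choose s)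
      = ∑ s ∈ Finset.range (k+1), ((-2:ℝ))^s * (k.choose s) := by
    symm
    apply Finset.sum_subset
    · intro s hs; rw [Finset.mem_range] at *; omega
    · intro s _ hs
      rw [Finset.mem_range, not_lt] at hs
      rw [Nat.choose_eq_zero_of_lt (by omega)]
      simp
  rw [hsub]
  have h4 := add_pow (-2 : ℝ) 1 k
  norm_num at h4
  simpa using h4.symm

lemma sup'_of_monotone {d : ℕ} (y : Fin d → ℝ) (hy : Monotone y) (R : Finset (Fin d))
    (h : R.Nonempty) : R.sup' h y = y (R.max' h) :=
  le_antisymm (Finset.sup'_le _ _ fun i hi => hy (Finset.le_max' R i hi))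
    (Finset.le_sup' y (R.max'_mem h))

lemma fiber_card {d r : ℕ} (hr : 1 ≤ r) (k : Fin d) :
    ((Finset.powersetCard r (Finset.univ : Finset (Fin d))).filter
      (fun R => R.max = (k : WithBot (Fin d)))).card = (k : ℕ).choose (r - 1) := by
  rw [← Fin.card_Iio k, ← Finset.card_powersetCard]
  apply Finset.card_nbij' (fun R => R.erase k) (fun R' => insert k R')
  · intro R hR
    rw [Finset.mem_coe, Finset.mem_filter, Finset.mem_powersetCard] at hR
    obtain ⟨⟨_, hcard⟩, hmax⟩ := hR
    have hne : R.Nonempty := Finset.card_pos.mp (by omega)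
    have hkR : k ∈ R := by
      have := R.max'_mem hne
      have hc : (↑(R.max' hne) : WithBot (Fin d)) = R.max := Finset.coe_max' hne
      rw [hmax] at hc
      have : R.max' hne = k := by exact_mod_cast hc
      rwa [← this]
    rw [Finset.mem_coe, Finset.mem_powersetCard]
    constructor
    · intro j hj
      rw [Finset.mem_erase] at hj
      rw [Finset.mem_Iio]
      have : (↑j : WithBot (Fin d)) ≤ R.max := Finset.le_max hj.2
      rw [hmax] at this
      have hle : j ≤ k := by exact_mod_cast this
      exact lt_of_le_of_ne hle hj.1
    · rw [Finset.card_erase_of_mem hkR, hcard]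
  · intro R' hR'
    rw [Finset.mem_coe, Finset.mem_powersetCard] at hR'
    obtain ⟨hsub, hcard⟩ := hR'
    have hkR' : k ∉ R' := fun h => absurd (Finset.mem_Iio.mp (hsub h)) (lt_irrefl k)
    rw [Finset.mem_coe, Finset.mem_filter, Finset.mem_powersetCard]
    refine ⟨⟨Finset.subset_univ _, ?_⟩, ?_⟩
    · rw [Finset.card_insert_of_notMem hkR', hcard]; omega
    · apply le_antisymm
      · apply Finset.max_le
        intro a ha
        rcases Finset.mem_insert.mp ha with rfl | h
        · exact le_rfl
        · exact_mod_cast le_of_lt (Finset.mem_Iio.mp (hsub h))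
      · exact Finset.le_max (Finset.mem_insert_self k R')
  · intro R hR
    rw [Finset.mem_coe, Finset.mem_filter, Finset.mem_powersetCard] at hR
    obtain ⟨⟨_, hcard⟩, hmax⟩ := hR
    have hne : R.Nonempty := Finset.card_pos.mp (by omega)
    have hkR : k ∈ R := by
      have hc : (↑(R.max' hne) : WithBot (Fin d)) = R.max := Finset.coe_max' hne
      rw [hmax] at hc
      have : R.max' hne = k := by exact_mod_cast hc
      rw [← this]; exact R.max'_mem hne
    exact Finset.insert_erase hkR
  · intro R' hR'
    rw [Finset.mem_coe, Finset.mem_powersetCard] at hR'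
    have hkR' : k ∉ R' := fun h => absurd (Finset.mem_Iio.mp (hR'.1 h)) (lt_irrefl k)
    exact Finset.erase_insert hkR'

lemma sum_powerset_monotone {d r : ℕ} (hd : 0 < d) (hr : 1 ≤ r) (y : Fin d → ℝ)
    (hy : Monotone y) :
    ∑ R ∈ Finset.powersetCard r (Finset.univ : Finset (Fin d)),
      (if h : R.Nonempty then R.sup' h y else 0)
    = ∑ k : Fin d, ((k : ℕ).choose (r-1) : ℝ) * y k := by
  classical
  rw [← Finset.sum_fiberwise (Finset.powersetCard r (Finset.univ : Finset (Fin d)))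
    (fun R => WithBot.unbotD ⟨0, hd⟩ R.max)
    (fun R => if h : R.Nonempty then R.sup' h y else 0)]
  apply Finset.sum_congr rfl
  intro k _
  have hfib : ∀ R : Finset (Fin d), R ∈ Finset.powersetCard r (Finset.univ : Finset (Fin d)) →
      (WithBot.unbotD ⟨0, hd⟩ R.max = k ↔ R.max = (k : WithBot (Fin d))) := by
    intro R hR
    rw [Finset.mem_powersetCard] at hR
    have hne : R.Nonempty := Finset.card_pos.mp (by omega)
    have hc : (↑(R.max' hne) : WithBot (Fin d)) = R.max := Finset.coe_max' hne
    rw [← hc]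
    simp [WithBot.unbotD_coe]
  rw [Finset.filter_congr hfib]
  have hval : ∀ R ∈ (Finset.powersetCard r (Finset.univ : Finset (Fin d))).filter
      (fun R => R.max = (k : WithBot (Fin d))),
      (if h : R.Nonempty then R.sup' h y else 0) = y k := by
    intro R hR
    rw [Finset.mem_filter, Finset.mem_powersetCard] at hR
    obtain ⟨⟨_, hcard⟩, hmax⟩ := hR
    have hne : R.Nonempty := Finset.card_pos.mp (by omega)
    rw [dif_pos hne, sup'_of_monotone y hy R hne]
    congr 1
    have hc : (↑(R.max' hne) : WithBot (Fin d)) = R.max := Finset.coe_max' hne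
    rw [hmax] at hc
    exact_mod_cast hc
  rw [Finset.sum_congr rfl hval, Finset.sum_const, fiber_card hr k, nsmul_eq_mul]

lemma sign_eq (a k : ℕ) : (-1/2:ℝ)^(a+k) * (-1)^k = (1/2)^(a+k) * (-1)^a := by
  have h1 : ((-1:ℝ)/2)^(a+k) = (-1)^(a+k) * (1/2)^(a+k) := by rw [← mul_pow]; norm_num
  rw [h1, pow_add (-1:ℝ)]
  have h2 : (-1:ℝ)^k * (-1)^k = 1 := by rw [← pow_add, ← two_mul, pow_mul]; norm_num
  linear_combination ((-1:ℝ)^a * (1/2)^(a+k)) * h2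

theorem stmt8 (d : ℕ) (hd : 2 ≤ d)
    (S : ℕ → (Fin d → ℝ) → ℝ)
    (hS : ∀ (r : ℕ) (hr : 1 ≤ r) (hrd : r ≤ d) (x : Fin d → ℝ),
      S r x = (1 / (d.choose r) : ℝ) *
        ∑ R ∈ (Finset.powersetCard r (Finset.univ : Finset (Fin d))).attach,
          R.1.sup' (Finset.card_pos.mp (by
            rw [(Finset.mem_powersetCard.mp R.2).2]; exact hr)) x) :
    ∃ β₀ : ℝ, ∃ β : ℕ → ℝ,
      ∀ x : Fin d → ℝ, (∀ i, x i ∈ Set.Icc (0 : ℝ) 1) →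
        |Finset.univ.sup' (Finset.univ_nonempty_iff.mpr
            (Fin.pos_iff_nonempty.mp (by omega))) x
          - β₀ - ∑ r ∈ Finset.Icc 1 (d - 1), β r * S r x| ≤ 1 / 2 ^ d := by
  classical
  have hd0 : 0 < d := by omega
  refine ⟨1 / 2 ^ d, fun r => -(-1/2 : ℝ)^(d-r) * (d.choose r), ?_⟩
  intro x hx
  set σ := Tuple.sort x with hσ
  set y : Fin d → ℝ := x ∘ σ with hy
  have hymono : Monotone y := Tuple.monotone_sort x
  set g : (Fin d → ℝ) → Finset (Fin d) → ℝ :=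
    fun z R => if h : R.Nonempty then R.sup' h z else 0 with hg
  have claim2 : ∀ r : ℕ,
      ∑ R ∈ Finset.powersetCard r (Finset.univ : Finset (Fin d)), g x R
      = ∑ R ∈ Finset.powersetCard r (Finset.univ : Finset (Fin d)), g y R := by
    intro r
    have huniv : (Finset.univ : Finset (Fin d)).map σ.toEmbedding = Finset.univ :=
      Finset.map_univ_equiv σ
    conv_lhs => rw [← huniv, Finset.powersetCard_map, Finset.sum_map]
    apply Finset.sum_congr rfl
    intro R _
    simp only [hg, RelEmbedding.coe_toEmbedding, Finset.mapEmbedding_apply]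
    by_cases hne : R.Nonempty
    · have hne2 : (R.map σ.toEmbedding).Nonempty := Finset.map_nonempty.mpr hne
      rw [dif_pos hne2, dif_pos hne, Finset.sup'_map]
      rfl
    · have hne2 : ¬(R.map σ.toEmbedding).Nonempty := fun h =>
        hne (Finset.map_nonempty.mp h)
      rw [dif_neg hne2, dif_neg hne]
  have claim3 : ∀ r : ℕ, 1 ≤ r →
      ∑ R ∈ Finset.powersetCard r (Finset.univ : Finset (Fin d)), g x R
      = ∑ k : Fin d, ((k : ℕ).choose (r-1) : ℝ) * y k := by
    intro r hr
    rw [claim2 r]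
    exact sum_powerset_monotone hd0 hr y hymono
  have claimS : ∀ r ∈ Finset.Icc 1 (d-1),
      (-(-1/2 : ℝ)^(d-r) * (d.choose r)) * S r x
      = (-(-1/2 : ℝ)^(d-r)) * ∑ k : Fin d, ((k : ℕ).choose (r-1) : ℝ) * y k := by
    intro r hr
    rw [Finset.mem_Icc] at hr
    have hrd : r ≤ d := by omega
    rw [hS r hr.1 hrd x]
    have hattach : ∑ R ∈ (Finset.powersetCard r (Finset.univ : Finset (Fin d))).attach,
        R.1.sup' (Finset.card_pos.mp (by
          rw [(Finset.mem_powersetCard.mp R.2).2]; exact hr.1)) x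
        = ∑ R ∈ Finset.powersetCard r (Finset.univ : Finset (Fin d)), g x R := by
      rw [← Finset.sum_attach (Finset.powersetCard r (Finset.univ : Finset (Fin d))) (g x)]
      apply Finset.sum_congr rfl
      intro R _
      have hne : R.1.Nonempty := Finset.card_pos.mp (by
        rw [(Finset.mem_powersetCard.mp R.2).2]; exact hr.1)
      simp only [hg]
      rw [dif_pos hne]
    rw [hattach, claim3 r hr.1]
    have hC : (0 : ℝ) < (d.choose r : ℝ) := by
      exact_mod_cast Nat.choose_pos hrd
    field_simp
  have claimsup : Finset.univ.sup' (Finset.univ_nonempty_iff.mpr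
      (Fin.pos_iff_nonempty.mp (by omega))) x
      = ∑ k : Fin d, ((k : ℕ).choose (d-1) : ℝ) * y k := by
    rw [← claim3 d (by omega)]
    have hps : Finset.powersetCard d (Finset.univ : Finset (Fin d)) = {Finset.univ} := by
      simpa using Finset.powersetCard_self (Finset.univ : Finset (Fin d))
    rw [hps, Finset.sum_singleton]
    simp only [hg]
    have : Nonempty (Fin d) := Fin.pos_iff_nonempty.mp hd0
    rw [dif_pos Finset.univ_nonempty]
  rw [claimsup, Finset.sum_congr rfl claimS]
  have step1 : ∑ k : Fin d, ((k : ℕ).choose (d-1) : ℝ) * y k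
      - ∑ r ∈ Finset.Icc 1 (d-1), (-(-1/2 : ℝ)^(d-r)) * ∑ k : Fin d, ((k : ℕ).choose (r-1) : ℝ) * y k
      = ∑ r ∈ Finset.Icc 1 d, (-1/2 : ℝ)^(d-r) * ∑ k : Fin d, ((k : ℕ).choose (r-1) : ℝ) * y k := by
    have hIcc : Finset.Icc 1 d = Finset.Icc 1 ((d-1)+1) := by congr 1; omega
    rw [hIcc, Finset.sum_Icc_succ_top (by omega)]
    have hd1 : (d-1)+1 = d := by omega
    rw [hd1]
    simp only [Nat.sub_self, pow_zero, one_mul]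
    have hneg : ∀ r ∈ Finset.Icc 1 (d-1), (-(-1/2 : ℝ)^(d-r)) * ∑ k : Fin d, ((k : ℕ).choose (r-1) : ℝ) * y k
        = -((-1/2 : ℝ)^(d-r) * ∑ k : Fin d, ((k : ℕ).choose (r-1) : ℝ) * y k) := fun r _ => by ring
    rw [Finset.sum_congr rfl hneg, Finset.sum_neg_distrib]
    ring
  have step2 : ∑ r ∈ Finset.Icc 1 d, (-1/2 : ℝ)^(d-r) * ∑ k : Fin d, ((k : ℕ).choose (r-1) : ℝ) * y k
      = (1/2 : ℝ)^(d-1) * ∑ k : Fin d, (-1 : ℝ)^(d-1-(k:ℕ)) * y k := by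
    have h1 : ∀ r ∈ Finset.Icc 1 d, (-1/2 : ℝ)^(d-r) * ∑ k : Fin d, ((k : ℕ).choose (r-1) : ℝ) * y k
        = ∑ k : Fin d, (-1/2 : ℝ)^(d-r) * ((k : ℕ).choose (r-1) : ℝ) * y k := by
      intro r _; rw [Finset.mul_sum]; exact Finset.sum_congr rfl fun k _ => by ring
    rw [Finset.sum_congr rfl h1, Finset.sum_comm, Finset.mul_sum]
    apply Finset.sum_congr rfl
    intro k _
    have hsum : ∀ r ∈ Finset.Icc 1 d, (-1/2:ℝ)^(d-r) * (((k:ℕ)).choose (r-1) : ℝ) * y k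
        = ((-1/2:ℝ)^(d-r) * (((k:ℕ)).choose (r-1) : ℝ)) * y k := fun r _ => by ring
    rw [Finset.sum_congr rfl hsum, ← Finset.sum_mul, binom_sum d (k:ℕ) k.isLt]
    have hsplit : d - 1 = (d - 1 - (k:ℕ)) + (k:ℕ) := by have := k.isLt; omega
    have hse := sign_eq (d - 1 - (k:ℕ)) (k:ℕ)
    rw [← hsplit] at hse
    rw [hse]
    ring
  have hynn : ∀ i, 0 ≤ y i := fun i => (hx (σ i)).1
  have hyle : ∀ i, y i ≤ 1 := fun i => (hx (σ i)).2
  obtain ⟨hA0, hA1'⟩ := alt_bound d y hymono hynn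
  have hA1 := hA1' 1 zero_le_one hyle
  have key : ∑ k : Fin d, ((k : ℕ).choose (d-1) : ℝ) * y k - 1/2^d
      - ∑ r ∈ Finset.Icc 1 (d-1), (-(-1/2 : ℝ)^(d-r)) * ∑ k : Fin d, ((k : ℕ).choose (r-1) : ℝ) * y k
      = (1/2 : ℝ)^(d-1) * (∑ k : Fin d, (-1 : ℝ)^(d-1-(k:ℕ)) * y k) - 1/2^d := by
    rw [← step2, ← step1]; ring
  rw [key]
  set A := ∑ k : Fin d, (-1 : ℝ)^(d-1-(k:ℕ)) * y k with hA
  have hpow : (2:ℝ)^d = 2^(d-1) * 2 := by rw [← pow_succ]; congr 1; omega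
  have hhalf : (1/2:ℝ)^(d-1) = 1/2^(d-1) := by rw [div_pow]; norm_num
  have hp : (0:ℝ) < 2^(d-1) := by positivity
  have he : (1/2:ℝ)^(d-1) = 2 * (1/2^d) := by
    rw [hhalf, hpow]
    field_simp
  have hmul1 : (1/2:ℝ)^(d-1) * A ≤ (1/2)^(d-1) * 1 :=
    mul_le_mul_of_nonneg_left hA1 (by positivity)
  have hmul0 : 0 ≤ (1/2:ℝ)^(d-1) * A := mul_nonneg (by positivity) hA0
  rw [abs_le]
  constructor
  · linarith
  · rw [he] at hmul1 ⊢
    linarith
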